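/- arXiv:2511.08907 — 2 statements merged into one kernel-verified Lean document; each statement's English description precedes it below -/
import Mathlib

section
/- Let a finite group G act by homeomorphisms on a Hausdorff space X and let x ∈ X. Then for every open neighborhood U of x there exists an open neighborhood V ⊆ U of x such that: (1) for all y ∈ V, G_y ⊆ G_x; (2) for all g ∉ G_x, (g·V) ∩ V = ∅; and (3) for all g ∈ G_x, g·V = V. -/
open Pointwise

/-- For a finite group acting by homeomorphisms on a Hausdorff space and any
open `U ∋ x`, there is an open `V ⊆ U` about `x` satisfying inclusion of
stabilizers, discontinuity, and symmetry. -/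
theorem exists_good_neighborhood
    {G X : Type*} [Group G] [Finite G] [TopologicalSpace X] [T2Space X]
    [MulAction G X] [ContinuousConstSMul G X] (x : X)
    (U : Set X) (hU : IsOpen U) (hxU : x ∈ U) :
    ∃ V : Set X, V ⊆ U ∧ IsOpen V ∧ x ∈ V ∧
      (∀ y ∈ V, MulAction.stabilizer G y ≤ MulAction.stabilizer G x) ∧
      (∀ g : G, g ∉ MulAction.stabilizer G x → (g • V) ∩ V = ∅) ∧
      (∀ g : G, g ∈ MulAction.stabilizer G x → g • V = V) := by
  classical
  have key : ∀ g : G, ∃ W : Set X, IsOpen W ∧ x ∈ W ∧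
      (g ∉ MulAction.stabilizer G x → Disjoint W (g • W)) := by
    intro g
    by_cases hg : g ∈ MulAction.stabilizer G x
    · exact ⟨Set.univ, isOpen_univ, trivial, fun h => absurd hg h⟩
    · have hne : g • x ≠ x := hg
      obtain ⟨B, A, hB, hA, hgx, hx, hAB⟩ := t2_separation hne
      refine ⟨A ∩ g⁻¹ • B, hA.inter (hB.smul _), ⟨hx, ?_⟩, fun _ => ?_⟩
      · rw [Set.mem_inv_smul_set_iff]; exact hgx
      · refine Set.disjoint_left.2 fun y hy hy2 => ?_
        have h1 : y ∈ A := hy.1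
        have h2 : y ∈ B := by
          obtain ⟨z, hz, rfl⟩ := hy2
          have := hz.2
          rwa [Set.mem_inv_smul_set_iff] at this
        exact Set.disjoint_right.1 hAB h1 h2
  choose W hWopen hWx hWdisj using key
  set W0 : Set X := U ∩ ⋂ g : G, W g with hW0
  have hW0open : IsOpen W0 := hU.inter (isOpen_iInter_of_finite hWopen)
  have hW0x : x ∈ W0 := ⟨hxU, Set.mem_iInter.2 hWx⟩
  set V : Set X := ⋂ h : MulAction.stabilizer G x, (h : G) • W0 with hV
  have hVsubW0 : V ⊆ W0 := by
    intro y hy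
    have := Set.mem_iInter.1 hy ⟨1, one_mem _⟩
    simpa using this
  have hVopen : IsOpen V := isOpen_iInter_of_finite fun h => hW0open.smul _
  have hVx : x ∈ V := by
    refine Set.mem_iInter.2 fun h => ?_
    rw [Set.mem_smul_set_iff_inv_smul_mem]
    have : (h : G)⁻¹ • x = x := (inv_mem h.2 : (h:G)⁻¹ ∈ MulAction.stabilizer G x)
    rw [this]; exact hW0x
  have hsym : ∀ g : G, g ∈ MulAction.stabilizer G x → g • V = V := by
    intro g hg
    ext y
    rw [Set.mem_smul_set_iff_inv_smul_mem, hV, Set.mem_iInter, Set.mem_iInter]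
    constructor
    · intro h k
      have := h ⟨g⁻¹ * k, mul_mem (inv_mem hg) k.2⟩
      rw [Set.mem_smul_set_iff_inv_smul_mem] at this ⊢
      simpa [mul_smul] using this
    · intro h k
      have := h ⟨g * k, mul_mem hg k.2⟩
      rw [Set.mem_smul_set_iff_inv_smul_mem] at this ⊢
      simpa [mul_smul] using this
  have hdisc : ∀ g : G, g ∉ MulAction.stabilizer G x → (g • V) ∩ V = ∅ := by
    intro g hg
    have hsub : V ⊆ W g := fun y hy => (Set.mem_iInter.1 (hVsubW0 hy).2) g
    have : Disjoint V (g • V) :=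
      (hWdisj g hg).mono hsub (Set.smul_set_mono hsub)
    rw [Set.inter_comm]
    exact Set.disjoint_iff_inter_eq_empty.1 this
  refine ⟨V, fun y hy => (hVsubW0 hy).1, hVopen, hVx, ?_, hdisc, hsym⟩
  intro y hy g hg
  by_contra hgx
  have h1 : y ∈ g • V := ⟨y, hy, hg⟩
  have := hdisc g hgx
  have : y ∈ (g • V) ∩ V := ⟨h1, hy⟩
  simp_all
end

section
/- Let a finite group G act by homeomorphisms on a Hausdorff space X, let K ≤ G, and let X_K ⊆ X be the set of points whose stabilizer is conjugate to K, with image (X/G)_K in the quotient. Then the restriction of the quotient map π : X → X/G to X_K → (X/G)_K is a covering map, with number of sheets equal to the index [G : K]. -/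
/-- The stratum of points whose stabilizer is conjugate to `K`. -/
def conjStratum (G : Type*) [Group G] (X : Type*) [MulAction G X]
    (K : Subgroup G) : Set X :=
  {x : X | ∃ g : G,
    MulAction.stabilizer G x = Subgroup.map (MulAut.conj g).toMonoidHom K}

/-- The image of the stratum in the quotient `X/G`. -/
def conjStratumQuot (G : Type*) [Group G] (X : Type*) [MulAction G X]
    (K : Subgroup G) : Set (Quotient (MulAction.orbitRel G X)) :=
  {q | ∃ x ∈ conjStratum G X K, Quotient.mk (MulAction.orbitRel G X) x = q}

/-- The restriction of the quotient map to the stratum. -/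
def stratumQuotientMap (G : Type*) [Group G] (X : Type*) [MulAction G X]
    (K : Subgroup G) : conjStratum G X K → conjStratumQuot G X K :=
  fun x => ⟨Quotient.mk (MulAction.orbitRel G X) x.1, x.1, x.2, rfl⟩

open Set Topology Filter MulAction

/-- Generic criterion: a point is evenly covered if its preimage neighbourhood splits into
disjoint open sheets, each mapped bijectively onto an open set `V ∋ b`, and `f` is open. -/
theorem isEvenlyCovered_of_sheets {E B : Type*} [TopologicalSpace E] [TopologicalSpace B]
    {f : E → B} (hf : Continuous f) {b : B} (ι : Type*) [TopologicalSpace ι] [DiscreteTopology ι]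
    [Nonempty ι]
    (V : Set B) (hV : IsOpen V) (hb : b ∈ V)
    (S : ι → Set E) (hSo : ∀ i, IsOpen (S i))
    (hcover : f ⁻¹' V = ⋃ i, S i)
    (hdisj : ∀ i j e, e ∈ S i → e ∈ S j → i = j)
    (hmap : ∀ i, Set.BijOn f (S i) V)
    (hopen : ∀ W : Set E, IsOpen W → IsOpen (f '' W)) :
    IsEvenlyCovered f b ι := by
  classical
  haveI : Nonempty E := by
    obtain ⟨e, -, -⟩ := (hmap (Classical.arbitrary ι)).2.2 hb
    exact ⟨e⟩
  set σ : E → ι := fun e => if h : ∃ i, e ∈ S i then h.choose else Classical.arbitrary ι with hσ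
  have σ_uniq : ∀ e i, e ∈ S i → σ e = i := by
    intro e i hi
    have h : ∃ i, e ∈ S i := ⟨i, hi⟩
    simp only [hσ, dif_pos h]
    exact hdisj _ _ _ h.choose_spec hi
  set ψ : B × ι → E := fun p =>
    if h : p.1 ∈ V then ((hmap p.2).2.2 h).choose else Classical.arbitrary E with hψ
  have ψ_spec : ∀ p : B × ι, p.1 ∈ V → ψ p ∈ S p.2 ∧ f (ψ p) = p.1 := by
    intro p hp
    simp only [hψ, dif_pos hp]
    exact ⟨((hmap p.2).2.2 hp).choose_spec.1, ((hmap p.2).2.2 hp).choose_spec.2⟩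
  have mem_source : ∀ {e i}, e ∈ S i → e ∈ f ⁻¹' V := fun {e i} hi =>
    (hmap i).1 hi
  refine IsEvenlyCovered.of_trivialization (t :=
    ⟨{ toFun := fun e => (f e, σ e)
       invFun := ψ
       source := f ⁻¹' V
       target := V ×ˢ univ
       map_source' := ?_
       map_target' := ?_
       left_inv' := ?_
       right_inv' := ?_
       open_source := ?_
       open_target := ?_
       continuousOn_toFun := ?_
       continuousOn_invFun := ?_ },
     V, hV, rfl, rfl, fun p hp => rfl⟩) hb
  · intro e he
    exact ⟨he, mem_univ _⟩
  · intro p hp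
    show f (ψ p) ∈ V
    rw [(ψ_spec p hp.1).2]; exact hp.1
  · intro e he
    have he' : e ∈ ⋃ i, S i := hcover ▸ he
    obtain ⟨i, hi⟩ := mem_iUnion.mp he'
    have hσe : σ e = i := σ_uniq e i hi
    have hfe : f e ∈ V := he
    show ψ (f e, σ e) = e
    rw [hσe]
    have hs := ψ_spec (f e, i) hfe
    exact (hmap i).2.1 hs.1 hi hs.2
  · intro p hp
    have hs := ψ_spec p hp.1
    exact Prod.ext hs.2 (σ_uniq _ _ hs.1)
  rotate_left 2
  · exact hf.isOpen_preimage V hV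
  · exact hV.prod isOpen_univ
  · apply ContinuousOn.prodMk (hf.continuousOn)
    intro e he
    have he' : e ∈ ⋃ i, S i := hcover ▸ he
    obtain ⟨i, hi⟩ := mem_iUnion.mp he'
    have : σ =ᶠ[𝓝 e] (fun _ => i) :=
      eventually_of_mem ((hSo i).mem_nhds hi) (fun y hy => σ_uniq y i hy)
    exact ((continuousAt_congr this).mpr continuousAt_const).continuousWithinAt
  · rw [continuousOn_iff']
    intro W hW
    refine ⟨⋃ i, (f '' (W ∩ S i)) ×ˢ {i}, ?_, ?_⟩
    · exact isOpen_iUnion fun i =>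
        (hopen _ (hW.inter (hSo i))).prod (isOpen_discrete _)
    · ext ⟨q, i⟩
      simp only [mem_inter_iff, mem_preimage, mem_prod, mem_univ, and_true, mem_iUnion,
        mem_singleton_iff]
      constructor
      · rintro ⟨hWq, hqV⟩
        have hs := ψ_spec (q, i) hqV
        exact ⟨⟨i, ⟨ψ (q, i), ⟨hWq, hs.1⟩, hs.2⟩, rfl⟩, hqV⟩
      · rintro ⟨⟨j, ⟨e₀, ⟨he₀W, he₀S⟩, hfe₀⟩, hij⟩, hqV⟩
        subst hij
        have hs := ψ_spec (q, i) hqV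
        have : ψ (q, i) = e₀ := (hmap i).2.1 hs.1 he₀S (hs.2.trans hfe₀.symm)
        exact ⟨this ▸ he₀W, hqV⟩

/-- Slices for finite group actions on Hausdorff spaces. -/
theorem exists_slice {G X : Type*} [Group G] [Finite G] [TopologicalSpace X] [T2Space X]
    [MulAction G X] [ContinuousConstSMul G X] (x : X) :
    ∃ U : Set X, IsOpen U ∧ x ∈ U ∧ ∀ g : G, ∀ y ∈ U, g • y ∈ U → g • x = x := by
  classical
  have key : ∀ g : G, ∃ W : Set X, IsOpen W ∧ x ∈ W ∧ (g • x ≠ x → ∀ y ∈ W, g • y ∉ W) := by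
    intro g
    by_cases h : g • x = x
    · exact ⟨Set.univ, isOpen_univ, mem_univ x, fun hc => absurd h hc⟩
    · obtain ⟨A, B, hA, hB, hgB, hxA, hAB⟩ := t2_separation h
      refine ⟨B ∩ (fun y => g • y) ⁻¹' A, hB.inter (hA.preimage (continuous_const_smul g)),
        ⟨hxA, by simpa using hgB⟩, fun _ y hy hgy => ?_⟩
      exact hAB.le_bot ⟨hy.2, hgy.1⟩ |>.elim
  choose W hWo hWx hWd using key
  refine ⟨⋂ g, W g, isOpen_iInter_of_finite hWo, mem_iInter.mpr hWx, fun g y hy hgy => ?_⟩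
  by_contra h
  exact hWd g h y (mem_iInter.mp hy g) (mem_iInter.mp hgy g)

section Aux
variable {G X : Type*} [Group G] [MulAction G X] {K : Subgroup G}

theorem quotMk_eq_iff {a b : X} :
    Quotient.mk (MulAction.orbitRel G X) a = Quotient.mk (MulAction.orbitRel G X) b ↔
      a ∈ MulAction.orbit G b := by
  rw [Quotient.eq]
  exact MulAction.orbitRel_apply

theorem conjStratum_smul_mem {x : X} (hx : x ∈ conjStratum G X K) (g : G) :
    g • x ∈ conjStratum G X K := by
  obtain ⟨g₀, h⟩ := hx
  refine ⟨g * g₀, ?_⟩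
  rw [MulAction.stabilizer_smul_eq_stabilizer_map_conj, h, Subgroup.map_map]
  congr 1
  ext a
  simp [mul_assoc]

theorem conjStratum_card_stabilizer {x : X} (hx : x ∈ conjStratum G X K) :
    Nat.card (MulAction.stabilizer G x) = Nat.card K := by
  obtain ⟨g₀, h⟩ := hx
  rw [h]
  exact (Nat.card_congr (K.equivMapOfInjective _ (MulAut.conj g₀).injective).toEquiv).symm

theorem conjStratum_index_stabilizer {x : X} (hx : x ∈ conjStratum G X K) :
    (MulAction.stabilizer G x).index = K.index := by
  obtain ⟨g₀, h⟩ := hx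
  rw [h]
  exact Subgroup.index_map_eq K (MulAut.conj g₀).surjective
    (by rw [(MulAut.conj g₀).toMonoidHom.ker_eq_bot_iff.mpr (MulAut.conj g₀).injective]
        exact bot_le)

/-- The fiber of the restricted quotient map is equivalent to the orbit. -/
noncomputable def fiberEquivOrbit (b : conjStratumQuot G X K) (x : X)
    (hx : x ∈ conjStratum G X K) (hxb : Quotient.mk (MulAction.orbitRel G X) x = b.1) :
    ↥(stratumQuotientMap G X K ⁻¹' {b}) ≃ MulAction.orbit G x where
  toFun p := ⟨p.1.1, by
    have : Quotient.mk (MulAction.orbitRel G X) p.1.1 = b.1 :=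
      congrArg Subtype.val p.2
    exact quotMk_eq_iff.mp (this.trans hxb.symm)⟩
  invFun o := ⟨⟨o.1, by
      obtain ⟨g, hg⟩ := o.2
      exact hg ▸ conjStratum_smul_mem hx g⟩,
    by
      apply Subtype.ext
      show Quotient.mk (MulAction.orbitRel G X) o.1 = b.1
      rw [← hxb]
      exact quotMk_eq_iff.mpr o.2⟩
  left_inv p := by ext; rfl
  right_inv o := by ext; rfl

end Aux

/-- For a finite group acting by homeomorphisms on a Hausdorff space, the
restriction of the quotient map to the stratum `X_K → (X/G)_K` is a covering
map with `[G : K]` sheets. -/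
theorem stratum_restriction_isCoveringMap
    {G X : Type*} [Group G] [Finite G] [TopologicalSpace X] [T2Space X]
    [MulAction G X] [ContinuousConstSMul G X] (K : Subgroup G) :
    IsCoveringMap (stratumQuotientMap G X K) ∧
      ∀ b : conjStratumQuot G X K,
        Nat.card ((stratumQuotientMap G X K) ⁻¹' {b}) = K.index := by
  classical
  set f := stratumQuotientMap G X K with hf_def
  have hf : Continuous f :=
    Continuous.subtype_mk (continuous_quot_mk.comp continuous_subtype_val) _
  have hcard : ∀ b : conjStratumQuot G X K, Nat.card (f ⁻¹' {b}) = K.index := by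
    intro b
    obtain ⟨x, hx, hxb⟩ := b.2
    rw [Nat.card_congr ((fiberEquivOrbit b x hx hxb).trans
      (MulAction.orbitEquivQuotientStabilizer G x))]
    exact conjStratum_index_stabilizer hx
  refine ⟨fun b => ?_, hcard⟩
  obtain ⟨x, hx, hxb⟩ := b.2
  obtain ⟨U, hUo, hxU, hU4⟩ := exists_slice (G := G) x
  have stabEq : ∀ y, y ∈ U → y ∈ conjStratum G X K →
      MulAction.stabilizer G y = MulAction.stabilizer G x := by
    intro y hyU hyS
    have hle : MulAction.stabilizer G y ≤ MulAction.stabilizer G x := by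
      intro g hg
      have hgy : g • y ∈ U := by
        rwa [show g • y = y from MulAction.mem_stabilizer_iff.mp hg]
      exact MulAction.mem_stabilizer_iff.mpr (hU4 g y hyU hgy)
    exact Subgroup.eq_of_le_of_card_ge hle
      (le_of_eq ((conjStratum_card_stabilizer hx).trans
        (conjStratum_card_stabilizer hyS).symm))
  have injOn : ∀ y z : X, y ∈ U → z ∈ U → z ∈ conjStratum G X K →
      y ∈ MulAction.orbit G z → y = z := by
    rintro y z hyU hzU hzS ⟨k, hk⟩
    have hk' : k • z = y := hk
    have hkU : k • z ∈ U := by rwa [hk']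
    have hkx : k ∈ MulAction.stabilizer G x :=
      MulAction.mem_stabilizer_iff.mpr (hU4 k z hzU hkU)
    rw [← stabEq z hzU hzS] at hkx
    rw [← hk']
    exact MulAction.mem_stabilizer_iff.mp hkx
  set ι := ↥(f ⁻¹' {b}) with hι
  haveI : Nonempty ι := ⟨⟨⟨x, hx⟩, Subtype.ext hxb⟩⟩
  haveI : Finite ↥(MulAction.orbit G x) := Set.finite_coe_iff.mpr (Set.finite_range _)
  haveI : Finite ι := Finite.of_equiv _ (fiberEquivOrbit b x hx hxb).symm
  set V : Set (conjStratumQuot G X K) :=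
    {q | q.1 ∈ Quotient.mk (MulAction.orbitRel G X) '' U} with hV_def
  have hV : IsOpen V :=
    IsOpen.preimage continuous_subtype_val (isOpenMap_quotient_mk'_mul U hUo)
  have hbV : b ∈ V := ⟨x, hxU, hxb⟩
  set S : ι → Set (conjStratum G X K) := fun i =>
    {e | ∃ g : G, g • (e : X) ∈ U ∧ g⁻¹ • x = (i.1 : X)} with hS_def
  have hSo : ∀ i, IsOpen (S i) := by
    intro i
    have hrep : S i = ⋃ (g : G) (_ : g⁻¹ • x = (i.1 : X)),
        (fun e : conjStratum G X K => g • (e : X)) ⁻¹' U := by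
      ext e
      simp only [hS_def, Set.mem_setOf_eq, Set.mem_iUnion, Set.mem_preimage]
      exact ⟨fun ⟨g, h1, h2⟩ => ⟨g, h2, h1⟩, fun ⟨g, h2, h1⟩ => ⟨g, h1, h2⟩⟩
    rw [hrep]
    exact isOpen_iUnion fun g => isOpen_iUnion fun _ =>
      hUo.preimage ((continuous_const_smul g).comp continuous_subtype_val)
  have hmemV : ∀ (i : ι), ∀ e ∈ S i, f e ∈ V := by
    rintro i e ⟨g, hgU, -⟩
    exact ⟨g • (e : X), hgU, quotMk_eq_iff.mpr ⟨g, rfl⟩⟩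
  have hcover : f ⁻¹' V = ⋃ i, S i := by
    ext e
    simp only [Set.mem_preimage, Set.mem_iUnion]
    constructor
    · rintro ⟨u, huU, hue⟩
      obtain ⟨g, hg⟩ := quotMk_eq_iff.mp hue
      refine ⟨⟨⟨g⁻¹ • x, conjStratum_smul_mem hx g⁻¹⟩, Subtype.ext ?_⟩, g, ?_, rfl⟩
      · show Quotient.mk (MulAction.orbitRel G X) (g⁻¹ • x) = b.1
        rw [← hxb]; exact quotMk_eq_iff.mpr ⟨g⁻¹, rfl⟩
      · show g • (e : X) ∈ U
        rwa [show g • (e : X) = u from hg]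
    · rintro ⟨i, hi⟩
      exact hmemV i e hi
  have hdisj : ∀ i j (e : conjStratum G X K), e ∈ S i → e ∈ S j → i = j := by
    rintro i j e ⟨g, hgU, hgi⟩ ⟨g', hg'U, hg'j⟩
    have h1 : (g' * g⁻¹) • (g • (e : X)) ∈ U := by
      rwa [smul_smul, mul_assoc, inv_mul_cancel, mul_one]
    have h2 : (g' * g⁻¹) • x = x := hU4 _ _ hgU h1
    have h3 : g⁻¹ • x = g'⁻¹ • x := by
      have h4 := congrArg (fun z => g'⁻¹ • z) h2
      simpa [smul_smul, inv_mul_cancel_left, mul_assoc] using h4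
    exact Subtype.ext (Subtype.ext (by rw [← hgi, ← hg'j]; exact h3))
  have hmap : ∀ i, Set.BijOn f (S i) V := by
    intro i
    refine ⟨fun e he => hmemV i e he, ?_, ?_⟩
    · rintro e ⟨g, hgU, hgi⟩ e' ⟨g', hg'U, hg'i⟩ hfe
      have hq : Quotient.mk (MulAction.orbitRel G X) (e : X)
          = Quotient.mk (MulAction.orbitRel G X) (e' : X) := congrArg Subtype.val hfe
      have hu : g • (e : X) ∈ MulAction.orbit G (g' • (e' : X)) := by
        apply quotMk_eq_iff.mp
        calc Quotient.mk (MulAction.orbitRel G X) (g • (e : X))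
            = Quotient.mk (MulAction.orbitRel G X) (e : X) := quotMk_eq_iff.mpr ⟨g, rfl⟩
          _ = Quotient.mk (MulAction.orbitRel G X) (e' : X) := hq
          _ = Quotient.mk (MulAction.orbitRel G X) (g' • (e' : X)) :=
              (quotMk_eq_iff.mpr ⟨g', rfl⟩).symm
      have hu_eq : g • (e : X) = g' • (e' : X) :=
        injOn _ _ hgU hg'U (conjStratum_smul_mem e'.2 g') hu
      have hgg' : g⁻¹ • x = g'⁻¹ • x := hgi.trans hg'i.symm
      have hst : (g' * g⁻¹) • (g' • (e' : X)) = g' • (e' : X) := by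
        have hmem : (g' * g⁻¹) ∈ MulAction.stabilizer G (g' • (e' : X)) := by
          rw [stabEq _ hg'U (conjStratum_smul_mem e'.2 g')]
          exact MulAction.mem_stabilizer_iff.mpr (by rw [mul_smul, hgg', smul_inv_smul])
        exact MulAction.mem_stabilizer_iff.mp hmem
      apply Subtype.ext
      have h5 : g⁻¹ • (g' • (e' : X)) = g'⁻¹ • (g' • (e' : X)) := by
        have h6 := congrArg (fun z => g'⁻¹ • z) hst
        simpa [smul_smul, inv_mul_cancel_left, mul_assoc] using h6
      calc (e : X) = g⁻¹ • (g • (e : X)) := (inv_smul_smul g _).symm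
        _ = g⁻¹ • (g' • (e' : X)) := by rw [hu_eq]
        _ = g'⁻¹ • (g' • (e' : X)) := h5
        _ = (e' : X) := inv_smul_smul g' _
    · rintro q ⟨u, huU, huq⟩
      obtain ⟨z, hzS, hzq⟩ := q.2
      have huS : u ∈ conjStratum G X K := by
        obtain ⟨g, hg⟩ := quotMk_eq_iff.mp (huq.trans hzq.symm)
        exact hg ▸ conjStratum_smul_mem hzS g
      have hib : Quotient.mk (MulAction.orbitRel G X) (i.1 : X) = b.1 :=
        congrArg Subtype.val i.2
      obtain ⟨k, hk⟩ := quotMk_eq_iff.mp (hib.trans hxb.symm)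
      refine ⟨⟨k • u, conjStratum_smul_mem huS k⟩, ⟨k⁻¹, ?_, ?_⟩, ?_⟩
      · show k⁻¹ • (k • u) ∈ U
        rw [inv_smul_smul]; exact huU
      · show (k⁻¹)⁻¹ • x = (i.1 : X)
        rw [inv_inv]; exact hk
      · apply Subtype.ext
        show Quotient.mk (MulAction.orbitRel G X) (k • u) = q.1
        rw [← huq]; exact quotMk_eq_iff.mpr ⟨k, rfl⟩
  have hopen : ∀ W : Set (conjStratum G X K), IsOpen W → IsOpen (f '' W) := by
    intro W hW
    obtain ⟨O, hO, rfl⟩ := isOpen_induced_iff.mp hW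
    have himg : f '' (Subtype.val ⁻¹' O) =
        Subtype.val ⁻¹' (Quotient.mk (MulAction.orbitRel G X) '' O) := by
      ext q
      simp only [Set.mem_image, Set.mem_preimage]
      constructor
      · rintro ⟨e, heO, rfl⟩
        exact ⟨(e : X), heO, rfl⟩
      · rintro ⟨o, hoO, hoq⟩
        obtain ⟨z, hzS, hzq⟩ := q.2
        have hoS : o ∈ conjStratum G X K := by
          obtain ⟨g, hg⟩ := quotMk_eq_iff.mp (hoq.trans hzq.symm)
          exact hg ▸ conjStratum_smul_mem hzS g
        exact ⟨⟨o, hoS⟩, hoO, Subtype.ext hoq⟩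
    rw [himg]
    exact IsOpen.preimage continuous_subtype_val (isOpenMap_quotient_mk'_mul O hO)
  exact (isEvenlyCovered_of_sheets hf ι V hV hbV S hSo hcover hdisj hmap
    hopen).to_isEvenlyCovered_preimage
end
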